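/- Let X be the set [0,1] × {0,1} endowed with the order topology of the lexicographic order, equipped with its Borel σ-algebra. For a set B ⊆ X write B⁺ = {x ∈ [0,1] : (x,1) ∈ B} and B⁻ = {x ∈ [0,1] : (x,0) ∈ B}. Then for every Borel measurable set B ⊆ X, the symmetric difference B⁺ Δ B⁻ is a countable set. -/

import Mathlib

open scoped symmDiff

/-- The double arrow space: `[0,1] × {0,1}` with the order topology of the
lexicographic order. -/
abbrev DoubleArrow : Type := ↥(Set.Icc (0:ℝ) 1) ×ₗ Fin 2

noncomputable instance : TopologicalSpace DoubleArrow := Preorder.topology DoubleArrow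

instance : OrderTopology DoubleArrow := ⟨rfl⟩

noncomputable instance : MeasurableSpace DoubleArrow := borel DoubleArrow

open Set

private abbrev I01 : Type := ↥(Set.Icc (0:ℝ) 1)

private lemma da_lt_iff (a b : I01) (i j : Fin 2) :
    (toLex (a, i) : DoubleArrow) < toLex (b, j) ↔ a < b ∨ (a = b ∧ i < j) :=
  Prod.Lex.lt_iff

private lemma countable_upper (U : Set DoubleArrow) (hU : IsOpen U) :
    {x : I01 | (toLex (x, (1 : Fin 2)) : DoubleArrow) ∈ U ∧
      (toLex (x, (0 : Fin 2)) : DoubleArrow) ∉ U}.Countable := by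
  set S := {x : I01 | (toLex (x, (1 : Fin 2)) : DoubleArrow) ∈ U ∧
      (toLex (x, (0 : Fin 2)) : DoubleArrow) ∉ U}
  set S' := S \ {x : I01 | (x : ℝ) = 1}
  have hsub : S ⊆ S' ∪ {x : I01 | (x : ℝ) = 1} := fun x hx => by
    by_cases h : (x : ℝ) = 1
    · exact Or.inr h
    · exact Or.inl ⟨hx, h⟩
  have hsing : {x : I01 | (x : ℝ) = 1}.Countable := by
    apply Set.Subsingleton.countable
    intro a ha b hb
    exact Subtype.ext (ha.trans hb.symm)
  refine Set.Countable.mono hsub (Set.Countable.union ?_ hsing)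
  -- key step
  have key : ∀ x ∈ S', ∃ q : ℚ, (x : ℝ) < q ∧
      ∀ z : I01, (x : ℝ) < z → (z : ℝ) < q →
        (toLex (z, (0 : Fin 2)) : DoubleArrow) ∈ U := by
    intro x hx
    obtain ⟨⟨hx1, hx0⟩, hxne⟩ := hx
    have hxlt1 : (x : ℝ) < 1 := lt_of_le_of_ne x.2.2 hxne
    have hUnhds : U ∈ nhds (toLex (x, (1 : Fin 2)) : DoubleArrow) := hU.mem_nhds hx1
    have hlo : ∃ l : DoubleArrow, l < toLex (x, (1 : Fin 2)) :=
      ⟨toLex (x, (0 : Fin 2)), by rw [da_lt_iff]; exact Or.inr ⟨rfl, by decide⟩⟩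
    have hhi : ∃ u : DoubleArrow, (toLex (x, (1 : Fin 2)) : DoubleArrow) < u := by
      refine ⟨toLex (⟨1, by norm_num, le_rfl⟩, (1 : Fin 2)), ?_⟩
      rw [da_lt_iff]
      exact Or.inl (by exact_mod_cast hxlt1)
    rw [mem_nhds_iff_exists_Ioo_subset' hlo hhi] at hUnhds
    obtain ⟨l, u, ⟨hla, hau⟩, hsub2⟩ := hUnhds
    -- first coordinate of u
    set yu : I01 := (ofLex u).1 with hyu
    have huexp : u = toLex ((ofLex u).1, (ofLex u).2) := rfl
    have hxyu : x < yu := by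
      rw [huexp, da_lt_iff] at hau
      rcases hau with h | ⟨h1, h2⟩
      · exact h
      · exact absurd h2 (by have := (ofLex u).2.2; omega)
    obtain ⟨q, hq1, hq2⟩ := exists_rat_btwn (Subtype.coe_lt_coe.mpr hxyu)
    refine ⟨q, hq1, fun z hz1 hz2 => ?_⟩
    apply hsub2
    constructor
    · calc l < toLex (x, (1 : Fin 2)) := hla
        _ < toLex (z, (0 : Fin 2)) := by
          rw [da_lt_iff]; exact Or.inl (Subtype.coe_lt_coe.mp hz1)
    · rw [huexp, da_lt_iff]
      exact Or.inl (Subtype.coe_lt_coe.mp (hz2.trans hq2))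
  choose! f hf1 hf2 using key
  have hinj : Set.InjOn f S' := by
    intro a ha b hb hab
    by_contra hne
    have hne' : a ≠ b := fun h => hne h
    rcases lt_or_gt_of_ne hne' with h | h
    · exact hb.1.2 (hf2 a ha b (Subtype.coe_lt_coe.mpr h) (hab ▸ hf1 b hb))
    · exact ha.1.2 (hf2 b hb a (Subtype.coe_lt_coe.mpr h) (hab ▸ hf1 a ha))
  exact Set.countable_of_injective_of_countable_image hinj (Set.to_countable _)

private lemma countable_lower (U : Set DoubleArrow) (hU : IsOpen U) :
    {x : I01 | (toLex (x, (0 : Fin 2)) : DoubleArrow) ∈ U ∧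
      (toLex (x, (1 : Fin 2)) : DoubleArrow) ∉ U}.Countable := by
  set S := {x : I01 | (toLex (x, (0 : Fin 2)) : DoubleArrow) ∈ U ∧
      (toLex (x, (1 : Fin 2)) : DoubleArrow) ∉ U}
  set S' := S \ {x : I01 | (x : ℝ) = 0}
  have hsub : S ⊆ S' ∪ {x : I01 | (x : ℝ) = 0} := fun x hx => by
    by_cases h : (x : ℝ) = 0
    · exact Or.inr h
    · exact Or.inl ⟨hx, h⟩
  have hsing : {x : I01 | (x : ℝ) = 0}.Countable := by
    apply Set.Subsingleton.countable
    intro a ha b hb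
    exact Subtype.ext (ha.trans hb.symm)
  refine Set.Countable.mono hsub (Set.Countable.union ?_ hsing)
  have key : ∀ x ∈ S', ∃ q : ℚ, (q : ℝ) < x ∧
      ∀ z : I01, (z : ℝ) < x → (q : ℝ) < z →
        (toLex (z, (1 : Fin 2)) : DoubleArrow) ∈ U := by
    intro x hx
    obtain ⟨⟨hx0, hx1⟩, hxne⟩ := hx
    have hxgt0 : (0 : ℝ) < x := lt_of_le_of_ne x.2.1 (fun h => hxne h.symm)
    have hUnhds : U ∈ nhds (toLex (x, (0 : Fin 2)) : DoubleArrow) := hU.mem_nhds hx0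
    have hlo : ∃ l : DoubleArrow, l < toLex (x, (0 : Fin 2)) := by
      refine ⟨toLex (⟨0, le_rfl, by norm_num⟩, (0 : Fin 2)), ?_⟩
      rw [da_lt_iff]
      exact Or.inl (by exact_mod_cast hxgt0)
    have hhi : ∃ u : DoubleArrow, (toLex (x, (0 : Fin 2)) : DoubleArrow) < u :=
      ⟨toLex (x, (1 : Fin 2)), by rw [da_lt_iff]; exact Or.inr ⟨rfl, by decide⟩⟩
    rw [mem_nhds_iff_exists_Ioo_subset' hlo hhi] at hUnhds
    obtain ⟨l, u, ⟨hla, hau⟩, hsub2⟩ := hUnhds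
    set yl : I01 := (ofLex l).1 with hyl
    have hlexp : l = toLex ((ofLex l).1, (ofLex l).2) := rfl
    have hylx : yl < x := by
      rw [hlexp, da_lt_iff] at hla
      rcases hla with h | ⟨h1, h2⟩
      · exact h
      · exact absurd h2 (by have := (ofLex l).2.2; omega)
    obtain ⟨q, hq1, hq2⟩ := exists_rat_btwn (Subtype.coe_lt_coe.mpr hylx)
    refine ⟨q, hq2, fun z hz1 hz2 => ?_⟩
    apply hsub2
    constructor
    · rw [hlexp, da_lt_iff]
      exact Or.inl (Subtype.coe_lt_coe.mp (hq1.trans hz2))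
    · refine lt_trans ?_ hau
      rw [da_lt_iff]
      exact Or.inl (Subtype.coe_lt_coe.mp hz1)
  choose! f hf1 hf2 using key
  have hinj : Set.InjOn f S' := by
    intro a ha b hb hab
    by_contra hne
    have hne' : a ≠ b := fun h => hne h
    rcases lt_or_gt_of_ne hne' with h | h
    · exact ha.1.2 (hf2 b hb a (Subtype.coe_lt_coe.mpr h) (hab ▸ hf1 a ha))
    · exact hb.1.2 (hf2 a ha b (Subtype.coe_lt_coe.mpr h) (hab ▸ hf1 b hb))
  exact Set.countable_of_injective_of_countable_image hinj (Set.to_countable _)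

/-- For every Borel set `B` in the double arrow space the symmetric difference
`B⁺ Δ B⁻` is countable, where `B⁺ = {x : (x,1) ∈ B}` and `B⁻ = {x : (x,0) ∈ B}`. -/
theorem doubleArrow_measurableSet_symmDiff_countable (B : Set DoubleArrow)
    (hB : MeasurableSet B) :
    Set.Countable
      ({x : ↥(Set.Icc (0:ℝ) 1) | (toLex (x, (1 : Fin 2)) : DoubleArrow) ∈ B} ∆
       {x : ↥(Set.Icc (0:ℝ) 1) | (toLex (x, (0 : Fin 2)) : DoubleArrow) ∈ B}) := by
  have hB' : @MeasurableSet DoubleArrow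
      (MeasurableSpace.generateFrom {s : Set DoubleArrow | IsOpen s}) B := hB
  refine MeasurableSpace.generateFrom_induction {s : Set DoubleArrow | IsOpen s}
    (fun s _ => Set.Countable
      ({x : I01 | (toLex (x, (1 : Fin 2)) : DoubleArrow) ∈ s} ∆
       {x : I01 | (toLex (x, (0 : Fin 2)) : DoubleArrow) ∈ s}))
    ?_ ?_ ?_ ?_ B hB'
  · -- open sets
    intro t ht _
    have : ({x : I01 | (toLex (x, (1 : Fin 2)) : DoubleArrow) ∈ t} ∆
        {x : I01 | (toLex (x, (0 : Fin 2)) : DoubleArrow) ∈ t}) ⊆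
        {x : I01 | (toLex (x, (1 : Fin 2)) : DoubleArrow) ∈ t ∧
          (toLex (x, (0 : Fin 2)) : DoubleArrow) ∉ t} ∪
        {x : I01 | (toLex (x, (0 : Fin 2)) : DoubleArrow) ∈ t ∧
          (toLex (x, (1 : Fin 2)) : DoubleArrow) ∉ t} := by
      intro x hx
      rcases hx with ⟨h1, h2⟩ | ⟨h1, h2⟩
      · exact Or.inl ⟨h1, h2⟩
      · exact Or.inr ⟨h1, h2⟩
    exact Set.Countable.mono this
      (Set.Countable.union (countable_upper t ht) (countable_lower t ht))
  · -- empty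
    simp
  · -- complement
    intro t _ h
    have h1 : {x : I01 | (toLex (x, (1 : Fin 2)) : DoubleArrow) ∈ tᶜ} =
        {x : I01 | (toLex (x, (1 : Fin 2)) : DoubleArrow) ∈ t}ᶜ := rfl
    have h0 : {x : I01 | (toLex (x, (0 : Fin 2)) : DoubleArrow) ∈ tᶜ} =
        {x : I01 | (toLex (x, (0 : Fin 2)) : DoubleArrow) ∈ t}ᶜ := rfl
    rw [h1, h0, compl_symmDiff_compl]
    exact h
  · -- countable union
    intro s _ hs
    have : ({x : I01 | (toLex (x, (1 : Fin 2)) : DoubleArrow) ∈ ⋃ i, s i} ∆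
        {x : I01 | (toLex (x, (0 : Fin 2)) : DoubleArrow) ∈ ⋃ i, s i}) ⊆
        ⋃ n, ({x : I01 | (toLex (x, (1 : Fin 2)) : DoubleArrow) ∈ s n} ∆
          {x : I01 | (toLex (x, (0 : Fin 2)) : DoubleArrow) ∈ s n}) := by
      intro x hx
      rcases hx with ⟨h1, h2⟩ | ⟨h1, h2⟩
      · simp only [Set.mem_setOf_eq, Set.mem_iUnion] at h1 h2
        obtain ⟨n, hn⟩ := h1
        exact Set.mem_iUnion.mpr ⟨n, Or.inl ⟨hn, fun h => h2 ⟨n, h⟩⟩⟩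
      · simp only [Set.mem_setOf_eq, Set.mem_iUnion] at h1 h2
        obtain ⟨n, hn⟩ := h1
        exact Set.mem_iUnion.mpr ⟨n, Or.inr ⟨hn, fun h => h2 ⟨n, h⟩⟩⟩
    exact Set.Countable.mono this (Set.countable_iUnion hs)
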